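/- For any q ≥ 2, t ≥ 0, and y ∈ ℝ, t^{q−2}·y² + |y|^q ≤ 2·γ_q(t, y) ≤ q·( t^{q−2}·y² + |y|^q ). -/
import Mathlib


/-- The smoothed `q`-norm function `γ_q(t,y)`. -/
noncomputable def gammaFn (q t y : ℝ) : ℝ :=
  if |y| ≤ t then (q / 2) * t ^ (q - 2) * y ^ 2
  else |y| ^ q + (q / 2 - 1) * t ^ q

/-- for any `q ≥ 2`, `t ≥ 0`, `y ∈ ℝ`:
`t^{q−2}y² + |y|^q ≤ 2γ_q(t,y) ≤ q(t^{q−2}y² + |y|^q)`. -/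
theorem stmt11 (q t y : ℝ) (hq : 2 ≤ q) (ht : 0 ≤ t) :
    t ^ (q - 2) * y ^ 2 + |y| ^ q ≤ 2 * gammaFn q t y ∧
      2 * gammaFn q t y ≤ q * (t ^ (q - 2) * y ^ 2 + |y| ^ q) := by
  have hq2 : (0:ℝ) ≤ q - 2 := by linarith
  have hay : (0:ℝ) ≤ |y| := abs_nonneg y
  have hts : (0:ℝ) ≤ t ^ (q - 2) := Real.rpow_nonneg ht _
  have hys : (0:ℝ) ≤ |y| ^ q := Real.rpow_nonneg hay _
  have hy2 : (0:ℝ) ≤ y ^ 2 := sq_nonneg y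
  have h2 : |y| ^ (2:ℝ) = y ^ 2 := by
    rw [Real.rpow_two]; exact sq_abs y
  have habs : |y| ^ q = |y| ^ (q - 2) * y ^ 2 := by
    rw [← h2, ← Real.rpow_add' hay (by norm_num; linarith : q - 2 + 2 ≠ 0)]
    norm_num
  have ht2 : t ^ (2:ℝ) = t ^ 2 := by rw [Real.rpow_two, sq]
  have htq : t ^ q = t ^ (q - 2) * t ^ 2 := by
    rw [← ht2, ← Real.rpow_add' ht (by norm_num; linarith : q - 2 + 2 ≠ 0)]
    norm_num
  unfold gammaFn
  split_ifs with h
  · -- |y| ≤ t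
    have hm : |y| ^ (q - 2) ≤ t ^ (q - 2) := Real.rpow_le_rpow hay h hq2
    have hkey : |y| ^ q ≤ t ^ (q - 2) * y ^ 2 := by
      rw [habs]; exact mul_le_mul_of_nonneg_right hm hy2
    constructor
    · nlinarith
    · nlinarith
  · -- t < |y|
    push_neg at h
    have hle : t ≤ |y| := le_of_lt h
    have hm : t ^ (q - 2) ≤ |y| ^ (q - 2) := Real.rpow_le_rpow ht hle hq2
    have hmq : t ^ q ≤ |y| ^ q := Real.rpow_le_rpow ht hle (by linarith)
    have hkey : t ^ (q - 2) * y ^ 2 ≤ |y| ^ q := by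
      rw [habs]; exact mul_le_mul_of_nonneg_right hm hy2
    have htq0 : (0:ℝ) ≤ t ^ q := Real.rpow_nonneg ht _
    have hM : (q - 2) * t ^ q ≤ (q - 2) * |y| ^ q := mul_le_mul_of_nonneg_left hmq hq2
    have hN : (0:ℝ) ≤ t ^ (q - 2) * y ^ 2 := mul_nonneg hts hy2
    constructor
    · nlinarith
    · nlinarith
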